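/- Let C = max_{1≤i≤N} C_i. Then P̄_cor^opt(C) = C, the POVM with M_0 = I and M_i = 0 for i ≥ 1 is optimal for inconclusive degree q = C, and hence 1 ∈ P_I(C). -/

import Mathlib

open Matrix ComplexOrder

noncomputable section

namespace FRIR

variable {d N : ℕ}

/-- A POVM with `N+1` outcomes on a `d`-dimensional system: `M 0` is the
inconclusive outcome, `M i.succ` is the conclusive outcome for state `i`. -/
def IsPOVM (M : Fin (N + 1) → Matrix (Fin d) (Fin d) ℂ) : Prop :=
  (∀ i, (M i).PosSemidef) ∧ ∑ i, M i = 1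

/-- `ρ₀ = ∑ i q_i ρ_i`. -/
def rho0 (q : Fin N → ℝ) (ρ : Fin N → Matrix (Fin d) (Fin d) ℂ) :
    Matrix (Fin d) (Fin d) ℂ :=
  ∑ i, (q i : ℂ) • ρ i

/-- The probability of the inconclusive result, `P_I = tr(ρ₀ M₀)`. -/
def PIof (q : Fin N → ℝ) (ρ : Fin N → Matrix (Fin d) (Fin d) ℂ)
    (M : Fin (N + 1) → Matrix (Fin d) (Fin d) ℂ) : ℝ :=
  (Matrix.trace (rho0 q ρ * M 0)).re

/-- `P_cor = ∑ i q_i tr(ρ_i M_i)`. -/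
def Pcor (q : Fin N → ℝ) (ρ : Fin N → Matrix (Fin d) (Fin d) ℂ)
    (M : Fin (N + 1) → Matrix (Fin d) (Fin d) ℂ) : ℝ :=
  ∑ i : Fin N, q i * (Matrix.trace (ρ i * M i.succ)).re

/-- `P̄_cor = q·tr(ρ₀M₀) + ∑ i q_i tr(ρ_i M_i)`. -/
def PbarCor (qv : ℝ) (q : Fin N → ℝ) (ρ : Fin N → Matrix (Fin d) (Fin d) ℂ)
    (M : Fin (N + 1) → Matrix (Fin d) (Fin d) ℂ) : ℝ :=
  qv * PIof q ρ M + Pcor q ρ M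

/-- `P̄_cor^opt(q)`: the maximal value of `P̄_cor` over all POVMs. -/
def PbarOpt (qv : ℝ) (q : Fin N → ℝ) (ρ : Fin N → Matrix (Fin d) (Fin d) ℂ) : ℝ :=
  sSup {x : ℝ | ∃ M, IsPOVM M ∧ PbarCor qv q ρ M = x}

/-- `P_cor^opt(Q)`: the maximal value of `P_cor` over POVMs with `P_I = Q`. -/
def PcorOpt (Q : ℝ) (q : Fin N → ℝ) (ρ : Fin N → Matrix (Fin d) (Fin d) ℂ) : ℝ :=
  sSup {x : ℝ | ∃ M, IsPOVM M ∧ PIof q ρ M = Q ∧ Pcor q ρ M = x}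

/-- `P_I(q) = { tr(ρ₀M₀) : POVMs attaining P̄_cor^opt(q) }`. -/
def PIset (qv : ℝ) (q : Fin N → ℝ) (ρ : Fin N → Matrix (Fin d) (Fin d) ℂ) : Set ℝ :=
  {Q : ℝ | ∃ M, IsPOVM M ∧ PbarCor qv q ρ M = PbarOpt qv q ρ ∧ PIof q ρ M = Q}

lemma trace_re_nonneg {d : ℕ} {M : Matrix (Fin d) (Fin d) ℂ} (hM : M.PosSemidef) :
    0 ≤ (Matrix.trace M).re := by
  have h : ∀ i, 0 ≤ (M i i).re := fun i => by
    have := hM.re_dotProduct_nonneg (Pi.single i 1)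
    simpa [dotProduct, Pi.single_apply, apply_ite] using this
  simp only [Matrix.trace, Matrix.diag, Complex.re_sum]
  exact Finset.sum_nonneg fun i _ => h i

open scoped MatrixOrder in
lemma trace_mul_re_nonneg {d : ℕ} {A B : Matrix (Fin d) (Fin d) ℂ}
    (hA : A.PosSemidef) (hB : B.PosSemidef) : 0 ≤ (Matrix.trace (A * B)).re := by
  have h1 : A * B = CFC.sqrt A * (CFC.sqrt A * B) := by
    rw [← mul_assoc, CFC.sqrt_mul_sqrt_self A hA.nonneg]
  rw [h1, Matrix.trace_mul_comm]
  have h2 : CFC.sqrt A * B * CFC.sqrt A = (CFC.sqrt A)ᴴ * B * CFC.sqrt A := by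
    rw [(CFC.sqrt_nonneg A).posSemidef.isHermitian.eq]
  have := hB.conjTranspose_mul_mul_same (CFC.sqrt A)
  rw [h2]
  exact trace_re_nonneg this

lemma smul_one_psd {d : ℕ} {c : ℝ} (hc : 0 ≤ c) :
    ((c : ℂ) • (1 : Matrix (Fin d) (Fin d) ℂ)).PosSemidef := by
  have : (c : ℂ) • (1 : Matrix (Fin d) (Fin d) ℂ) = Matrix.diagonal (fun _ => (c : ℂ)) := by
    rw [Matrix.smul_one_eq_diagonal]
  rw [this]
  exact Matrix.PosSemidef.diagonal (fun i => by positivity)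

/-- With `C = max_i C_i` (the largest of the maximum confidences),
`P̄_cor^opt(C) = C`, the POVM with `M₀ = I` and `M_i = 0` for `i ≥ 1` is optimal
for inconclusive degree `q = C`, and hence `1 ∈ P_I(C)`.

Here `ρ̄_i = ρ₀^{-1/2}(q_iρ_i)ρ₀^{-1/2}` is encoded via the positive semidefinite
square root `S` of `ρ₀` (`S * ρ̄_i * S = q_i ρ_i`), and `C_i` being the largest
eigenvalue of `ρ̄_i` is encoded by: `C_i • I - ρ̄_i` is positive semidefinite but
not positive definite. -/
theorem stmt4 {d N : ℕ} (hd : 0 < d) (hN : 0 < N)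
    (q : Fin N → ℝ) (ρ : Fin N → Matrix (Fin d) (Fin d) ℂ)
    (hq : ∀ i, 0 < q i) (hqsum : ∑ i, q i = 1)
    (hρ : ∀ i, (ρ i).PosSemidef) (htr : ∀ i, (ρ i).trace = 1)
    (hρ0 : (rho0 q ρ).PosDef)
    (S : Matrix (Fin d) (Fin d) ℂ) (hS : S.PosSemidef) (hSS : S * S = rho0 q ρ)
    (ρbar : Fin N → Matrix (Fin d) (Fin d) ℂ)
    (hρbar : ∀ i, S * ρbar i * S = (q i : ℂ) • ρ i)
    (C : Fin N → ℝ)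
    (hCpsd : ∀ i, ((C i : ℂ) • (1 : Matrix (Fin d) (Fin d) ℂ) - ρbar i).PosSemidef)
    (hCeig : ∀ i, ¬ ((C i : ℂ) • (1 : Matrix (Fin d) (Fin d) ℂ) - ρbar i).PosDef)
    (Cmax : ℝ) (hCmax : IsGreatest (Set.range C) Cmax) :
    PbarOpt Cmax q ρ = Cmax ∧
      IsPOVM (fun i : Fin (N + 1) =>
        if i = 0 then (1 : Matrix (Fin d) (Fin d) ℂ) else 0) ∧
      PbarCor Cmax q ρ (fun i : Fin (N + 1) =>
        if i = 0 then (1 : Matrix (Fin d) (Fin d) ℂ) else 0) = PbarOpt Cmax q ρ ∧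
      (1 : ℝ) ∈ PIset Cmax q ρ := by
  classical
  -- trace of rho0 is 1
  have htr0 : (rho0 q ρ).trace = 1 := by
    simp only [rho0, Matrix.trace_sum, Matrix.trace_smul, htr, smul_eq_mul, mul_one]
    rw [← Complex.ofReal_sum, hqsum, Complex.ofReal_one]
  have hCC : ∀ i, C i ≤ Cmax := fun i => hCmax.2 ⟨i, rfl⟩
  -- key pointwise estimate
  have key : ∀ (i : Fin N) (M : Matrix (Fin d) (Fin d) ℂ), M.PosSemidef →
      q i * (Matrix.trace (ρ i * M)).re ≤ Cmax * (Matrix.trace (rho0 q ρ * M)).re := by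
    intro i M hM
    have hX : (S * M * S).PosSemidef := by
      have := hM.conjTranspose_mul_mul_same S
      rwa [hS.isHermitian.eq] at this
    have h1 : ((q i : ℂ) • Matrix.trace (ρ i * M)) = Matrix.trace (ρbar i * (S * M * S)) := by
      rw [← Matrix.trace_smul, ← smul_mul_assoc, ← hρbar i,
        show (S * ρbar i * S) * M = S * (ρbar i * S * M) by simp [mul_assoc],
        Matrix.trace_mul_comm,
        show (ρbar i * S * M) * S = ρbar i * (S * M * S) by simp [mul_assoc]]
    have h2 : Matrix.trace (rho0 q ρ * M) = Matrix.trace (S * M * S) := by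
      rw [← hSS, show (S * S) * M = S * (S * M) by rw [mul_assoc], Matrix.trace_mul_comm,
        show (S * M) * S = S * M * S from rfl]
    have hPSD : ((Cmax : ℂ) • (1 : Matrix (Fin d) (Fin d) ℂ) - ρbar i).PosSemidef := by
      have h := (hCpsd i).add (smul_one_psd (d := d) (sub_nonneg.2 (hCC i)))
      have he : ((C i : ℂ) • (1 : Matrix (Fin d) (Fin d) ℂ) - ρbar i) +
          ((Cmax - C i : ℝ) : ℂ) • (1 : Matrix (Fin d) (Fin d) ℂ)
          = (Cmax : ℂ) • (1 : Matrix (Fin d) (Fin d) ℂ) - ρbar i := by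
        push_cast
        rw [sub_smul]
        abel
      rwa [he] at h
    have h3 := trace_mul_re_nonneg hPSD hX
    have h4 : ((Cmax : ℂ) • (1 : Matrix (Fin d) (Fin d) ℂ) - ρbar i) * (S * M * S)
        = (Cmax : ℂ) • (S * M * S) - ρbar i * (S * M * S) := by
      rw [sub_mul, smul_mul_assoc, one_mul]
    rw [h4, Matrix.trace_sub, Matrix.trace_smul] at h3
    have h5 : q i * (Matrix.trace (ρ i * M)).re
        = (Matrix.trace (ρbar i * (S * M * S))).re := by
      rw [← h1]
      simp [smul_eq_mul]
    have h6 : Cmax * (Matrix.trace (rho0 q ρ * M)).re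
        = Cmax * (Matrix.trace (S * M * S)).re := by rw [h2]
    rw [h5, h6]
    simpa [Complex.sub_re, smul_eq_mul, Complex.mul_re] using h3
  -- the trivial POVM
  set Mt : Fin (N + 1) → Matrix (Fin d) (Fin d) ℂ :=
    fun i => if i = 0 then (1 : Matrix (Fin d) (Fin d) ℂ) else 0 with hMt
  have hPOVM : IsPOVM Mt := by
    constructor
    · intro i
      by_cases h : i = 0 <;> simp [hMt, h, Matrix.PosSemidef.zero]
      exact Matrix.PosSemidef.one
    · simp [hMt]
  have hPI1 : PIof q ρ Mt = 1 := by
    simp [PIof, hMt, htr0]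
  have hval : PbarCor Cmax q ρ Mt = Cmax := by
    have hPc : Pcor q ρ Mt = 0 := by
      simp [Pcor, hMt, Fin.succ_ne_zero]
    rw [PbarCor, hPI1, hPc, mul_one, add_zero]
  -- upper bound
  have hub : ∀ M, IsPOVM M → PbarCor Cmax q ρ M ≤ Cmax := by
    intro M hM
    have hsum : (Matrix.trace (rho0 q ρ * M 0)).re
        + ∑ i : Fin N, (Matrix.trace (rho0 q ρ * M i.succ)).re = 1 := by
      have h : ∑ j : Fin (N + 1), (Matrix.trace (rho0 q ρ * M j)).re = 1 := by
        rw [← Complex.re_sum, ← Matrix.trace_sum, ← Finset.mul_sum, hM.2, mul_one, htr0]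
        simp
      rw [← h, Fin.sum_univ_succ]
    have hle : Pcor q ρ M ≤ ∑ i : Fin N, Cmax * (Matrix.trace (rho0 q ρ * M i.succ)).re :=
      Finset.sum_le_sum fun i _ => key i (M i.succ) (hM.1 i.succ)
    calc PbarCor Cmax q ρ M
        ≤ Cmax * (Matrix.trace (rho0 q ρ * M 0)).re
          + ∑ i : Fin N, Cmax * (Matrix.trace (rho0 q ρ * M i.succ)).re := by
          rw [PbarCor, PIof]; exact add_le_add_right hle _
      _ = Cmax * ((Matrix.trace (rho0 q ρ * M 0)).re
          + ∑ i : Fin N, (Matrix.trace (rho0 q ρ * M i.succ)).re) := by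
          rw [mul_add, Finset.mul_sum]
      _ = Cmax := by rw [hsum, mul_one]
  have hopt : PbarOpt Cmax q ρ = Cmax := by
    apply IsGreatest.csSup_eq
    constructor
    · exact ⟨Mt, hPOVM, hval⟩
    · rintro x ⟨M, hM, rfl⟩
      exact hub M hM
  exact ⟨hopt, hPOVM, by rw [hval, hopt], ⟨Mt, hPOVM, by rw [hval, hopt], hPI1⟩⟩

end FRIR
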